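/- (Square-integrability dichotomy for the fiber solutions) Let b > 0, m ∈ ℤ, ν ∈ ℝ and c₁, c₂ ∈ ℝ with (c₁, c₂) ≠ (0,0). Define u(r) = r^{m−ν}·e^{−b·r²/4}·( c₁ + c₂·∫₁^r ρ^{−1−2(m−ν)}·e^{b·ρ²/2} dρ ) for r > 1. Then ∫₁^∞ u(r)²·r dr < ∞ if and only if c₂ = 0. -/

import Mathlib

open MeasureTheory Filter Real Set

private lemma aux_tendsto {c : ℝ} (hc : 0 < c) (t d : ℝ) :
    Tendsto (fun r : ℝ => r ^ t * Real.exp (c * r ^ 2 + d * r)) atTop atTop := by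
  have h1 : Tendsto (fun r : ℝ => c * r ^ 2 + (d - |t|) * r) atTop atTop := by
    have : Tendsto (fun r : ℝ => r * (c * r + (d - |t|))) atTop atTop :=
      tendsto_id.atTop_mul_atTop₀ (tendsto_atTop_add_const_right _ _ (tendsto_id.const_mul_atTop hc))
    refine this.congr (fun r => by ring)
  have h2 : Tendsto (fun r : ℝ => Real.exp (c * r ^ 2 + (d - |t|) * r)) atTop atTop :=
    Real.tendsto_exp_atTop.comp h1
  refine tendsto_atTop_mono' _ ?_ h2
  filter_upwards [eventually_ge_atTop (1 : ℝ)] with r hr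
  have hr0 : 0 < r := lt_of_lt_of_le one_pos hr
  rw [Real.rpow_def_of_pos hr0, ← Real.exp_add]
  apply Real.exp_le_exp.mpr
  have hlog : 0 ≤ Real.log r := Real.log_nonneg hr
  have hlogr : Real.log r ≤ r := (Real.log_le_sub_one_of_pos hr0).trans (by linarith)
  nlinarith [neg_abs_le t, abs_nonneg t]

private noncomputable def gfun (b α : ℝ) (ρ : ℝ) : ℝ :=
  ρ ^ (-1 - 2 * α) * Real.exp (b * ρ ^ 2 / 2)

private noncomputable def Ifun (b α : ℝ) (r : ℝ) : ℝ :=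
  ∫ ρ in (1:ℝ)..r, gfun b α ρ

private lemma gfun_contOn (b α : ℝ) : ContinuousOn (gfun b α) (Set.Ici (1:ℝ)) := by
  intro x hx
  have hx0 : (0:ℝ) < x := lt_of_lt_of_le one_pos hx
  exact ((Real.continuousAt_rpow_const x _ (Or.inl hx0.ne')).mul
    (((continuous_const.mul (continuous_pow 2)).div_const 2).rexp.continuousAt)).continuousWithinAt

private lemma easy_dir (b : ℝ) (hb : 0 < b) (α c₁ : ℝ) :
    IntegrableOn (fun r : ℝ => (r ^ α * Real.exp (-b * r ^ 2 / 4) * c₁) ^ 2 * r)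
      (Set.Ioi 1) := by
  obtain ⟨n, hn⟩ := exists_nat_ge (2 * α + 1)
  have hint : IntegrableOn (fun r : ℝ => c₁ ^ 2 * (r ^ (n:ℝ) * Real.exp (-(b/2) * r ^ 2)))
      (Set.Ioi 1) := by
    apply Integrable.const_mul
    exact (integrableOn_rpow_mul_exp_neg_mul_sq (by linarith : (0:ℝ) < b/2)
      (lt_of_lt_of_le (by norm_num) (Nat.cast_nonneg n) : (-1:ℝ) < (n:ℝ))).mono_set
      (Set.Ioi_subset_Ioi zero_le_one)
  apply Integrable.mono' hint
  · have hco : ContinuousOn (fun r : ℝ => (r ^ α * Real.exp (-b * r ^ 2 / 4) * c₁) ^ 2 * r)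
        (Set.Ioi 1) := by
      apply ContinuousOn.mul ?_ continuousOn_id
      apply ContinuousOn.pow
      apply ContinuousOn.mul ?_ continuousOn_const
      apply ContinuousOn.mul ?_ (Continuous.continuousOn (by fun_prop))
      intro x hx
      exact (Real.continuousAt_rpow_const x α
        (Or.inl (ne_of_gt (lt_trans one_pos hx)))).continuousWithinAt
    exact hco.aestronglyMeasurable measurableSet_Ioi
  · rw [ae_restrict_iff' measurableSet_Ioi]
    filter_upwards with r hr
    have hr1 : (1:ℝ) ≤ r := le_of_lt hr
    have hr0 : (0:ℝ) < r := lt_of_lt_of_le one_pos hr1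
    rw [Real.norm_eq_abs, abs_of_nonneg (by positivity)]
    have e1 : (r ^ α * Real.exp (-b * r ^ 2 / 4) * c₁) ^ 2 * r
        = c₁ ^ 2 * (r ^ (2 * α + 1) * Real.exp (-(b/2) * r ^ 2)) := by
      rw [show (2:ℝ) * α + 1 = (α + α) + 1 by ring, Real.rpow_add hr0, Real.rpow_add hr0,
        Real.rpow_one]
      rw [show Real.exp (-(b/2) * r ^ 2) = Real.exp (-b * r ^ 2 / 4) * Real.exp (-b * r ^ 2 / 4)
        by rw [← Real.exp_add]; congr 1; ring]
      ring
    rw [e1]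
    apply mul_le_mul_of_nonneg_left ?_ (sq_nonneg c₁)
    apply mul_le_mul_of_nonneg_right ?_ (Real.exp_pos _).le
    exact Real.rpow_le_rpow_of_exponent_le hr1 hn

private lemma hard_dir (b : ℝ) (hb : 0 < b) (α c₁ c₂ : ℝ) (hc₂ : c₂ ≠ 0)
    (h : IntegrableOn
      (fun r : ℝ => (r ^ α * Real.exp (-b * r ^ 2 / 4) * (c₁ + c₂ * Ifun b α r)) ^ 2 * r)
      (Set.Ioi 1)) : False := by
  have hc₂' : 0 < |c₂| := abs_pos.mpr hc₂
  set s : ℝ := -1 - 2 * α with hs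
  set K : ℝ := min 1 ((2:ℝ) ^ (-s)) with hK
  have hK0 : 0 < K := lt_min one_pos (Real.rpow_pos_of_pos two_pos _)
  have hrpow_lb : ∀ (r ρ : ℝ), 0 < r → r / 2 ≤ ρ → ρ ≤ r → K * r ^ s ≤ ρ ^ s := by
    intro r ρ hr hρ1 hρ2
    have hρ0 : 0 < ρ := lt_of_lt_of_le (by linarith) hρ1
    rcases le_or_gt 0 s with h0 | h0
    · have h1 : K * r ^ s ≤ (2:ℝ) ^ (-s) * r ^ s :=
        mul_le_mul_of_nonneg_right (min_le_right _ _) (Real.rpow_nonneg hr.le _)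
      have h2 : (2:ℝ) ^ (-s) * r ^ s = (r / 2) ^ s := by
        rw [Real.div_rpow hr.le (by norm_num), Real.rpow_neg (by norm_num)]
        ring
      have h3 : (r / 2) ^ s ≤ ρ ^ s := Real.rpow_le_rpow (by linarith) hρ1 h0
      linarith
    · have h1 : K * r ^ s ≤ 1 * r ^ s :=
        mul_le_mul_of_nonneg_right (min_le_left _ _) (Real.rpow_nonneg hr.le _)
      have h3 : r ^ s ≤ ρ ^ s := Real.rpow_le_rpow_of_nonpos hρ0 hρ2 h0.le
      linarith
  -- lower bound on Ifun
  set L : ℝ → ℝ := fun r => K * (r ^ s * Real.exp (b * (r - 1) ^ 2 / 2)) with hL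
  have hIlb : ∀ r : ℝ, 2 ≤ r → L r ≤ Ifun b α r := by
    intro r hr
    have hr1 : (1:ℝ) ≤ r - 1 := by linarith
    have hint1 : IntervalIntegrable (gfun b α) volume 1 (r - 1) := by
      apply ((gfun_contOn b α).mono ?_).intervalIntegrable
      rw [Set.uIcc_of_le (by linarith)]
      exact fun x hx => hx.1
    have hint2 : IntervalIntegrable (gfun b α) volume (r - 1) r := by
      apply ((gfun_contOn b α).mono ?_).intervalIntegrable
      rw [Set.uIcc_of_le (by linarith)]
      exact fun x hx => le_trans hr1 hx.1
    have hsplit : Ifun b α r = (∫ ρ in (1:ℝ)..(r-1), gfun b α ρ)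
        + ∫ ρ in (r-1:ℝ)..r, gfun b α ρ :=
      (intervalIntegral.integral_add_adjacent_intervals hint1 hint2).symm
    have h1 : 0 ≤ ∫ ρ in (1:ℝ)..(r-1), gfun b α ρ := by
      apply intervalIntegral.integral_nonneg (by linarith)
      intro x hx
      have hx0 : (0:ℝ) < x := lt_of_lt_of_le one_pos hx.1
      unfold gfun
      positivity
    have h2 : L r ≤ ∫ ρ in (r-1:ℝ)..r, gfun b α ρ := by
      have hconst : (∫ _ρ in (r-1:ℝ)..r, L r) = L r := by
        rw [intervalIntegral.integral_const, smul_eq_mul]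
        ring_nf
      rw [← hconst]
      apply intervalIntegral.integral_mono_on (by linarith) intervalIntegrable_const hint2
      intro x hx
      have hx1 : r / 2 ≤ x := le_trans (by linarith) hx.1
      have hx0 : 0 < x := lt_of_lt_of_le (by linarith) hx1
      have hb1 : K * r ^ s ≤ x ^ s := hrpow_lb r x (by linarith) hx1 hx.2
      have hb2 : Real.exp (b * (r - 1) ^ 2 / 2) ≤ Real.exp (b * x ^ 2 / 2) := by
        apply Real.exp_le_exp.mpr
        have : (r - 1) ^ 2 ≤ x ^ 2 := by nlinarith [hx.1]
        nlinarith
      calc K * (r ^ s * Real.exp (b * (r - 1) ^ 2 / 2))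
          = (K * r ^ s) * Real.exp (b * (r - 1) ^ 2 / 2) := by ring
        _ ≤ x ^ s * Real.exp (b * x ^ 2 / 2) := by
            apply mul_le_mul hb1 hb2 (Real.exp_pos _).le
            positivity
        _ = gfun b α x := rfl
    linarith
  have hLtop : Tendsto L atTop atTop := by
    have base := aux_tendsto (c := b / 2) (by linarith) s (-b)
    have : Tendsto (fun r : ℝ => (K * Real.exp (b / 2)) *
        (r ^ s * Real.exp (b / 2 * r ^ 2 + (-b) * r))) atTop atTop :=
      base.const_mul_atTop (by positivity)
    refine this.congr (fun r => ?_)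
    simp only [hL]
    have e : Real.exp (b * (r - 1) ^ 2 / 2)
        = Real.exp (b / 2 * r ^ 2 + (-b) * r) * Real.exp (b / 2) := by
      rw [← Real.exp_add]; congr 1; ring
    rw [e]; ring
  set f : ℝ → ℝ := fun r =>
    (r ^ α * Real.exp (-b * r ^ 2 / 4) * (c₁ + c₂ * Ifun b α r)) ^ 2 * r with hf
  set Q : ℝ → ℝ := fun r =>
    (c₂ ^ 2 * K ^ 2 / 4 * Real.exp b) *
      (r ^ (2 * α + 2 * s + 1) * Real.exp (b / 2 * r ^ 2 + (-(2 * b)) * r)) with hQ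
  have hQtop : Tendsto Q atTop atTop :=
    (aux_tendsto (by linarith : (0:ℝ) < b / 2) (2 * α + 2 * s + 1)
      (-(2 * b))).const_mul_atTop (by positivity)
  have hev : ∀ᶠ r in atTop, Q r ≤ f r := by
    filter_upwards [eventually_ge_atTop (2:ℝ),
      hLtop.eventually_ge_atTop (2 * |c₁| / |c₂|)] with r hr2 hrL
    have hr0 : (0:ℝ) < r := by linarith
    have hIr : L r ≤ Ifun b α r := hIlb r hr2
    have hL0 : 0 ≤ L r := by
      have h' : 0 < r ^ s := Real.rpow_pos_of_pos hr0 _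
      simp only [hL]
      positivity
    have hI0 : 0 ≤ Ifun b α r := le_trans hL0 hIr
    have habs : |c₂| * Ifun b α r / 2 ≤ |c₁ + c₂ * Ifun b α r| := by
      have h1 : |c₂ * Ifun b α r| ≤ |c₁ + c₂ * Ifun b α r| + |c₁| := by
        calc |c₂ * Ifun b α r| = |(c₁ + c₂ * Ifun b α r) + (-c₁)| := by ring_nf
          _ ≤ |c₁ + c₂ * Ifun b α r| + |(-c₁)| := abs_add_le _ _
          _ = |c₁ + c₂ * Ifun b α r| + |c₁| := by rw [abs_neg]
      have h2 : |c₂ * Ifun b α r| = |c₂| * Ifun b α r := by rw [abs_mul, abs_of_nonneg hI0]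
      have h3 : |c₁| ≤ |c₂| * Ifun b α r / 2 := by
        have h4 : 2 * |c₁| / |c₂| ≤ Ifun b α r := le_trans hrL hIr
        rw [div_le_iff₀ hc₂'] at h4
        linarith
      linarith
    have hsq : (|c₂| * L r / 2) ^ 2 ≤ (c₁ + c₂ * Ifun b α r) ^ 2 := by
      rw [← sq_abs (c₁ + c₂ * Ifun b α r)]
      apply sq_le_sq' <;> nlinarith [abs_nonneg (c₁ + c₂ * Ifun b α r),
        mul_le_mul_of_nonneg_left hIr (abs_nonneg c₂)]
    have P1 : r ^ (2 * α + 2 * s + 1) = (r ^ α) ^ 2 * (r ^ s) ^ 2 * r := by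
      rw [show 2 * α + 2 * s + 1 = (α + α) + ((s + s) + 1) by ring,
        Real.rpow_add hr0, Real.rpow_add hr0, Real.rpow_add hr0, Real.rpow_add hr0,
        Real.rpow_one, sq, sq]
      ring
    have Erel : Real.exp (-b * r ^ 2 / 4) ^ 2 * Real.exp (b * (r - 1) ^ 2 / 2) ^ 2
        = Real.exp b * Real.exp (b / 2 * r ^ 2 + -(2 * b) * r) := by
      rw [pow_two (Real.exp (-b * r ^ 2 / 4)), pow_two (Real.exp (b * (r - 1) ^ 2 / 2)),
        ← Real.exp_add, ← Real.exp_add, ← Real.exp_add, ← Real.exp_add]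
      congr 1; ring
    have key : Q r = (r ^ α * Real.exp (-b * r ^ 2 / 4)) ^ 2 * (|c₂| * L r / 2) ^ 2 * r := by
      simp only [hQ, hL]
      rw [P1]
      linear_combination ((r ^ α) ^ 2 * (r ^ s) ^ 2 * r * c₂ ^ 2 * K ^ 2 / 4) * Erel.symm
        - ((r ^ α) ^ 2 * (r ^ s) ^ 2 * r * K ^ 2 *
            (Real.exp (-b * r ^ 2 / 4) ^ 2 * Real.exp (b * (r - 1) ^ 2 / 2) ^ 2) / 4) *
          (sq_abs c₂)
    have hfac : (r ^ α * Real.exp (-b * r ^ 2 / 4)) ^ 2 * (|c₂| * L r / 2) ^ 2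
        ≤ (r ^ α * Real.exp (-b * r ^ 2 / 4)) ^ 2 * (c₁ + c₂ * Ifun b α r) ^ 2 :=
      mul_le_mul_of_nonneg_left hsq (by positivity)
    calc Q r = (r ^ α * Real.exp (-b * r ^ 2 / 4)) ^ 2 * (|c₂| * L r / 2) ^ 2 * r := key
      _ ≤ (r ^ α * Real.exp (-b * r ^ 2 / 4)) ^ 2 * (c₁ + c₂ * Ifun b α r) ^ 2 * r :=
          mul_le_mul_of_nonneg_right hfac hr0.le
      _ = f r := by simp only [hf]; ring
  have hev1 : ∀ᶠ r in atTop, (1:ℝ) ≤ f r := by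
    filter_upwards [hev, hQtop.eventually_ge_atTop 1] with r h1 h2
    linarith
  obtain ⟨R, hR⟩ := hev1.exists_forall_of_atTop
  set R' : ℝ := max R 2 with hR'
  have hsub : Set.Ioi R' ⊆ Set.Ioi (1:ℝ) := fun x hx => by
    have h2 : (2:ℝ) ≤ R' := le_max_right _ _
    exact lt_of_lt_of_le (by linarith) (le_of_lt (Set.mem_Ioi.mp hx))
  have h' : IntegrableOn f (Set.Ioi R') := h.mono_set hsub
  have hconst : IntegrableOn (fun _ : ℝ => (1:ℝ)) (Set.Ioi R') := by
    apply Integrable.mono' h' aestronglyMeasurable_const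
    rw [ae_restrict_iff' measurableSet_Ioi]
    filter_upwards with x hx
    rw [norm_one]
    exact hR x (le_trans (le_max_left _ _) (le_of_lt hx))
  rw [integrableOn_const_iff] at hconst
  rcases hconst with h1 | h1
  · norm_num at h1
  · rw [Real.volume_Ioi] at h1
    exact (lt_irrefl _ h1).elim

/-- Square-integrability dichotomy for the fiber solutions: the explicit solution
`u(r) = r^{m−ν}·e^{−br²/4}·(c₁ + c₂·∫₁^r ρ^{−1−2(m−ν)}·e^{bρ²/2} dρ)` with `(c₁,c₂) ≠ (0,0)`
lies in `L²((1,∞), r dr)` iff `c₂ = 0`. -/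
theorem fiber_solution_square_integrable_iff
    (b : ℝ) (hb : 0 < b) (m : ℤ) (ν : ℝ) (c₁ c₂ : ℝ) (hc : (c₁, c₂) ≠ (0, 0)) :
    IntegrableOn
      (fun r : ℝ =>
        (r ^ ((m : ℝ) - ν) * Real.exp (-b * r ^ 2 / 4) *
          (c₁ + c₂ * ∫ ρ in (1:ℝ)..r,
            ρ ^ (-1 - 2 * ((m : ℝ) - ν)) * Real.exp (b * ρ ^ 2 / 2))) ^ 2 * r)
      (Set.Ioi 1) ↔
    c₂ = 0 := by
  constructor
  · intro h
    by_contra hc₂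
    exact hard_dir b hb ((m : ℝ) - ν) c₁ c₂ hc₂ h
  · intro h
    subst h
    simp only [zero_mul, add_zero]
    exact easy_dir b hb ((m : ℝ) - ν) c₁
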